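/- Let k ≥ 2 be an integer and a, b real numbers with b ≠ 0 and |(k-1)^{k-1}·a^k/(k^k·b^{k-1})| > 1 (in particular a ≠ 0). Then the series α = (-b/a)·Σ_{n≥0} (1/((k-1)n + 1))·C(kn, n)·((-1)^k·b^{k-1}/a^k)ⁿ converges, and its sum satisfies α^k + aα + b = 0. -/

import Mathlib

open Finset

/-- Fuss–Catalan type numbers `A(n,s) = s/(s+kn) · C(s+kn, n)`. -/
noncomputable def Afc (k n s : ℕ) : ℝ :=
  (s : ℝ) / ((s : ℝ) + k * n) * (Nat.choose (s + k * n) n)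

lemma Afc_nonneg (k n s : ℕ) : 0 ≤ Afc k n s := by
  unfold Afc; positivity

lemma Afc_zero_right (k n : ℕ) : Afc k n 0 = 0 := by simp [Afc]

lemma Afc_zero_left (k s : ℕ) : Afc k 0 (s+1) = 1 := by
  have h : ((s:ℝ)+1) ≠ 0 := by positivity
  simp [Afc, div_self h]

lemma recA (k : ℕ) (hk : 2 ≤ k) (n s : ℕ) :
    Afc k (n+1) (s+1) = Afc k (n+1) s + Afc k n (s+k) := by
  set M := s + k * (n+1) with hMdef
  have hnM : n + 1 ≤ M := by
    have : 2 * (n+1) ≤ k * (n+1) := Nat.mul_le_mul_right _ hk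
    omega
  have h1 : ((M+1).choose (n+1) : ℝ) = (M.choose n : ℝ) + (M.choose (n+1) : ℝ) := by
    rw [Nat.choose_succ_succ]; push_cast; ring
  have h2 : (M.choose (n+1) : ℝ) * ((n:ℝ)+1) = (M.choose n : ℝ) * ((M:ℝ) - n) := by
    have hc := congrArg (Nat.cast : ℕ → ℝ) (Nat.choose_succ_right_eq M n)
    push_cast [Nat.cast_sub (by omega : n ≤ M)] at hc
    linarith
  have hM0 : (0:ℝ) < (M:ℝ) := by
    have : 0 < M := by omega
    exact_mod_cast this
  have hM1 : (0:ℝ) < (M:ℝ) + 1 := by linarith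
  have hkM : (k:ℝ) * ((n:ℝ)+1) = (M:ℝ) - s := by
    have : (M:ℝ) = s + k * (n+1) := by rw [hMdef]; push_cast; ring
    linarith
  set x := (M.choose n : ℝ) with hx
  set y := (M.choose (n+1) : ℝ) with hy
  have key2 : ((s:ℝ)+1) * M * (x+y) = ((M:ℝ)+1) * ((s:ℝ)*y + ((s:ℝ)+(k:ℝ))*x) := by
    have key : ((s:ℝ)+1) * M * (x+y) * ((n:ℝ)+1)
        = ((M:ℝ)+1) * ((s:ℝ)*y + ((s:ℝ)+(k:ℝ))*x) * ((n:ℝ)+1) := by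
      linear_combination ((M:ℝ) - s) * h2 - ((M:ℝ)+1) * x * hkM
    have hn1 : ((n:ℝ)+1) ≠ 0 := by positivity
    exact mul_right_cancel₀ hn1 key
  unfold Afc
  rw [show s + 1 + k * (n+1) = M + 1 from by rw [hMdef]; ring,
    show s + k + k * n = M from by rw [hMdef]; ring,
    show s + k * (n+1) = M from rfl]
  have e1 : ((s:ℝ)+1) + (k:ℝ) * ((n:ℝ)+1) = (M:ℝ) + 1 := by linarith
  have e2 : (s:ℝ) + (k:ℝ) * ((n:ℝ)+1) = (M:ℝ) := by linarith
  have e3 : ((s:ℝ)+(k:ℝ)) + (k:ℝ) * (n:ℝ) = (M:ℝ) := by linarith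
  push_cast
  rw [e1, e2, e3, h1, ← hx, ← hy]
  rw [div_mul_eq_mul_div, div_mul_eq_mul_div, div_mul_eq_mul_div,
    div_add_div _ _ hM0.ne' hM0.ne', div_eq_div_iff hM1.ne' (by positivity)]
  linear_combination (M:ℝ) * key2

lemma Asucc1 (k : ℕ) (hk : 2 ≤ k) (i : ℕ) : Afc k (i+1) 1 = Afc k i k := by
  have h := recA k hk i 0
  simpa [Afc_zero_right] using h

/-- Rothe-type convolution identity for the Fuss–Catalan numbers. -/
lemma convA (k : ℕ) (hk : 2 ≤ k) :
    ∀ n s, (∑ p ∈ antidiagonal n, Afc k p.1 1 * Afc k p.2 (s+1)) = Afc k n (s+2) := by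
  intro n
  induction n using Nat.strong_induction_on with
  | _ n ih =>
    match n with
    | 0 => intro s; simp [Afc_zero_left]
    | Nat.succ m =>
      intro s
      induction s with
      | zero =>
        rw [Finset.Nat.sum_antidiagonal_succ]
        simp only [Afc_zero_left, one_mul]
        have hterm : ∀ p : ℕ × ℕ, p ∈ antidiagonal m →
            Afc k (p.1+1) 1 * Afc k p.2 1 = Afc k p.2 1 * Afc k p.1 ((k-2)+1+1) := by
          intro p _
          rw [Asucc1 k hk, mul_comm, show k-2+1+1 = k from by omega]
        rw [Finset.sum_congr rfl hterm]
        rw [← Finset.Nat.sum_antidiagonal_swap]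
        simp only [Prod.fst_swap, Prod.snd_swap]
        rw [ih m (by omega) (k-2+1)]
        have h := recA k hk m 1
        rw [show k-2+1+2 = 1+k from by omega]
        linarith
      | succ s ihs =>
        rw [Finset.Nat.sum_antidiagonal_succ']
        have hterm : ∀ p : ℕ × ℕ, p ∈ antidiagonal m →
            Afc k p.1 1 * Afc k (p.2+1) (s+1+1) =
              Afc k p.1 1 * Afc k (p.2+1) (s+1) + Afc k p.1 1 * Afc k p.2 ((s+k)+1) := by
          intro p _
          rw [recA k hk p.2 (s+1), mul_add, show s+1+k = s+k+1 from by omega]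
        rw [Finset.sum_congr rfl hterm, Finset.sum_add_distrib]
        rw [ih m (by omega) (s+k)]
        rw [Finset.Nat.sum_antidiagonal_succ'] at ihs
        have hrec := recA k hk m (s+2)
        simp only [Afc_zero_left] at ihs ⊢
        rw [show s+2+k = s+k+2 from by omega] at hrec
        linarith

lemma choose_le_pow_bound (m n : ℕ) {x : ℝ} (hx : 0 < x) :
    (m.choose n : ℝ) * x ^ n ≤ (1 + x) ^ m := by
  by_cases h : n ≤ m
  · rw [add_comm, add_pow]
    have hs := Finset.single_le_sum (f := fun i => x ^ i * 1 ^ (m - i) * (m.choose i : ℝ))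
      (fun i _ => by positivity) (show n ∈ Finset.range (m+1) from Finset.mem_range.mpr (by omega))
    calc (m.choose n : ℝ) * x ^ n = x ^ n * 1 ^ (m - n) * (m.choose n : ℝ) := by
          rw [one_pow]; ring
      _ ≤ _ := hs
  · rw [Nat.choose_eq_zero_of_lt (by omega)]
    simp only [Nat.cast_zero, zero_mul]
    positivity

lemma Afc_le (k : ℕ) (hk : 2 ≤ k) (n s : ℕ) :
    |Afc k n s| ≤ ((k:ℝ)/((k:ℝ)-1))^s * ((k:ℝ)^k/((k:ℝ)-1)^(k-1))^n := by
  have hc0 : (0:ℝ) < (k:ℝ) - 1 := by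
    have : (2:ℝ) ≤ (k:ℝ) := by exact_mod_cast hk
    linarith
  set c : ℝ := (k:ℝ) - 1 with hcdef
  have hck : (c:ℝ) + 1 = (k:ℝ) := by rw [hcdef]; ring
  have hx : (0:ℝ) < 1/c := by positivity
  have hb := choose_le_pow_bound (s + k*n) n hx
  have h1x : 1 + 1/c = (k:ℝ)/c := by field_simp; linarith
  rw [h1x] at hb
  have hC : ((s + k*n).choose n : ℝ) ≤ ((k:ℝ)/c)^(s+k*n) * c^n := by
    have h2 : ((s + k*n).choose n : ℝ) * (1/c)^n * c^n ≤ ((k:ℝ)/c)^(s+k*n) * c^n :=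
      mul_le_mul_of_nonneg_right hb (by positivity)
    calc ((s + k*n).choose n : ℝ) = ((s + k*n).choose n : ℝ) * (1/c)^n * c^n := by
          rw [mul_assoc, ← mul_pow]
          field_simp
          simp
      _ ≤ _ := h2
  have hck2 : c^k = c^(k-1) * c := by
    rw [← pow_succ, Nat.sub_add_cancel (by omega)]
  have hsplit : ((k:ℝ)/c)^(s+k*n) * c^n = ((k:ℝ)/c)^s * ((k:ℝ)^k/c^(k-1))^n := by
    rw [pow_add, pow_mul, mul_assoc, ← mul_pow]
    congr 2
    rw [div_pow, hck2]
    field_simp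
  have hAC : Afc k n s ≤ ((s + k*n).choose n : ℝ) := by
    unfold Afc
    rcases Nat.eq_zero_or_pos s with hs | hs
    · subst hs; simp
    · have hd : (0:ℝ) < (s:ℝ) + (k:ℝ)*(n:ℝ) := by
        have : (0:ℝ) < (s:ℝ) := by exact_mod_cast hs
        positivity
      have hle1 : (s:ℝ) / ((s:ℝ) + (k:ℝ)*(n:ℝ)) ≤ 1 := by
        rw [div_le_one hd]
        have : (0:ℝ) ≤ (k:ℝ)*(n:ℝ) := by positivity
        linarith
      calc (s:ℝ) / ((s:ℝ) + k*n) * ((s + k*n).choose n : ℝ)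
          ≤ 1 * ((s + k*n).choose n : ℝ) :=
            mul_le_mul_of_nonneg_right hle1 (by positivity)
        _ = _ := one_mul _
  rw [abs_of_nonneg (Afc_nonneg k n s)]
  calc Afc k n s ≤ ((s + k*n).choose n : ℝ) := hAC
    _ ≤ ((k:ℝ)/c)^(s+k*n) * c^n := hC
    _ = _ := hsplit

lemma summAfc (k : ℕ) (hk : 2 ≤ k) (t : ℝ)
    (hqt : (k:ℝ)^k / ((k:ℝ)-1)^(k-1) * |t| < 1) (s : ℕ) :
    Summable fun n : ℕ => ‖Afc k n s * t ^ n‖ := by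
  have hc0 : (0:ℝ) < (k:ℝ) - 1 := by
    have h2k : (2:ℝ) ≤ (k:ℝ) := by exact_mod_cast hk
    linarith
  have hr0 : 0 ≤ (k:ℝ)^k / ((k:ℝ)-1)^(k-1) * |t| := by positivity
  have hgeo : Summable fun n : ℕ =>
      ((k:ℝ)/((k:ℝ)-1))^s * (((k:ℝ)^k / ((k:ℝ)-1)^(k-1)) * |t|)^n :=
    Summable.mul_left _ (summable_geometric_of_lt_one hr0 hqt)
  refine Summable.of_nonneg_of_le (fun n => norm_nonneg _) (fun n => ?_) hgeo
  rw [Real.norm_eq_abs, abs_mul, abs_pow, mul_pow, ← mul_assoc]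
  exact mul_le_mul_of_nonneg_right (Afc_le k hk n s) (by positivity)

/-- Partial generating functions of the Fuss–Catalan family. -/
noncomputable def Fs (k : ℕ) (t : ℝ) (s : ℕ) : ℝ := ∑' n : ℕ, Afc k n s * t ^ n

lemma Fmul (k : ℕ) (hk : 2 ≤ k) (t : ℝ)
    (hqt : (k:ℝ)^k / ((k:ℝ)-1)^(k-1) * |t| < 1) (s : ℕ) :
    Fs k t 1 * Fs k t (s+1) = Fs k t (s+2) := by
  unfold Fs
  rw [tsum_mul_tsum_eq_tsum_sum_antidiagonal_of_summable_norm
    (summAfc k hk t hqt 1) (summAfc k hk t hqt (s+1))]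
  refine tsum_congr fun n => ?_
  have h : ∀ p : ℕ × ℕ, p ∈ antidiagonal n →
      Afc k p.1 1 * t ^ p.1 * (Afc k p.2 (s+1) * t ^ p.2)
        = Afc k p.1 1 * Afc k p.2 (s+1) * t ^ n := by
    intro p hp
    rw [Finset.HasAntidiagonal.mem_antidiagonal] at hp
    rw [← hp, pow_add]
    ring
  rw [Finset.sum_congr rfl h, ← Finset.sum_mul, convA k hk n s]

lemma Fpow (k : ℕ) (hk : 2 ≤ k) (t : ℝ)
    (hqt : (k:ℝ)^k / ((k:ℝ)-1)^(k-1) * |t| < 1) (s : ℕ) :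
    Fs k t (s+1) = (Fs k t 1)^(s+1) := by
  induction s with
  | zero => simp
  | succ m ih =>
    rw [← Fmul k hk t hqt m, ih, ← pow_succ']

/-- The Fuss–Catalan generating function satisfies `B = 1 + t·B^k`. -/
lemma Ffun (k : ℕ) (hk : 2 ≤ k) (t : ℝ)
    (hqt : (k:ℝ)^k / ((k:ℝ)-1)^(k-1) * |t| < 1) :
    Fs k t 1 = 1 + t * (Fs k t 1)^k := by
  have hsum : Summable fun n : ℕ => Afc k n 1 * t ^ n := (summAfc k hk t hqt 1).of_norm
  have h1 : ∀ n : ℕ, Afc k (n+1) 1 * t ^ (n+1) = t * (Afc k n k * t ^ n) := by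
    intro n
    rw [Asucc1 k hk, pow_succ]
    ring
  have h2 : Fs k t k = (Fs k t 1)^k := by
    have h := Fpow k hk t hqt (k-1)
    rwa [Nat.sub_add_cancel (by omega)] at h
  calc Fs k t 1 = Afc k 0 1 * t ^ 0 + ∑' n : ℕ, Afc k (n+1) 1 * t ^ (n+1) :=
        Summable.tsum_eq_zero_add hsum
    _ = 1 + t * Fs k t k := by
        rw [show Afc k 0 1 = 1 from Afc_zero_left k 0, pow_zero, mul_one,
          tsum_congr h1, tsum_mul_left]
        rfl
    _ = 1 + t * (Fs k t 1)^k := by rw [h2]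

lemma coeff_eq_Afc (k : ℕ) (hk : 2 ≤ k) (n : ℕ) :
    (1 / (((k : ℝ) - 1) * (n : ℝ) + 1)) * (Nat.choose (k * n) n : ℝ) = Afc k n 1 := by
  have hkn : n ≤ k * n := by
    calc n = 1 * n := (one_mul n).symm
      _ ≤ k * n := Nat.mul_le_mul_right n (by omega)
  have hc := congrArg (Nat.cast : ℕ → ℝ) (Nat.choose_mul_succ_eq (k*n) n)
  push_cast [Nat.cast_sub (by omega : n ≤ k*n+1)] at hc
  have hc0 : (0:ℝ) < (k:ℝ) - 1 := by
    have : (2:ℝ) ≤ (k:ℝ) := by exact_mod_cast hk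
    linarith
  have hd1 : (0:ℝ) < ((k:ℝ)-1) * n + 1 := by positivity
  have hd2 : (0:ℝ) < (1:ℝ) + (k:ℝ)*n := by positivity
  unfold Afc
  rw [show 1 + k*n = k*n+1 from by omega]
  push_cast
  rw [div_mul_eq_mul_div, div_mul_eq_mul_div, one_mul, one_mul,
    div_eq_div_iff hd1.ne' hd2.ne']
  linear_combination hc

theorem hypergeometric_series_trinomial_root_general (k : ℕ) (hk : 2 ≤ k)
    (a b : ℝ) (hb : b ≠ 0)
    (hr : |((k : ℝ) - 1) ^ (k - 1) * a ^ k / ((k : ℝ) ^ k * b ^ (k - 1))| > 1) :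
    Summable (fun n : ℕ =>
      (1 / (((k : ℝ) - 1) * (n : ℝ) + 1)) * (Nat.choose (k * n) n : ℝ) *
        ((-1 : ℝ) ^ k * b ^ (k - 1) / a ^ k) ^ n) ∧
    let α : ℝ := (-b / a) *
      ∑' n : ℕ, (1 / (((k : ℝ) - 1) * (n : ℝ) + 1)) * (Nat.choose (k * n) n : ℝ) *
        ((-1 : ℝ) ^ k * b ^ (k - 1) / a ^ k) ^ n
    α ^ k + a * α + b = 0 := by
  have hc0 : (0:ℝ) < (k:ℝ) - 1 := by
    have : (2:ℝ) ≤ (k:ℝ) := by exact_mod_cast hk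
    linarith
  have hk0 : (0:ℝ) < (k:ℝ) := by linarith
  have ha : a ≠ 0 := by
    intro h
    rw [h, zero_pow (by omega : k ≠ 0)] at hr
    simp at hr
    linarith
  set t : ℝ := (-1 : ℝ) ^ k * b ^ (k - 1) / a ^ k with htdef
  have habs_t : |t| = |b|^(k-1) / |a|^k := by
    rw [htdef, abs_div, abs_mul, abs_pow, abs_pow, abs_pow, abs_neg, abs_one,
      one_pow, one_mul]
  have hb0 : (0:ℝ) < |b| := abs_pos.mpr hb
  have ha0 : (0:ℝ) < |a| := abs_pos.mpr ha
  have habs_r : |((k : ℝ) - 1) ^ (k - 1) * a ^ k / ((k : ℝ) ^ k * b ^ (k - 1))|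
      = (((k:ℝ)-1)^(k-1) * |a|^k) / ((k:ℝ)^k * |b|^(k-1)) := by
    rw [abs_div, abs_mul, abs_mul, abs_pow, abs_pow, abs_pow, abs_pow,
      abs_of_pos hc0, abs_of_pos hk0]
  rw [habs_r] at hr
  have hdenpos : (0:ℝ) < (k:ℝ)^k * |b|^(k-1) := by positivity
  have hr' : (k:ℝ)^k * |b|^(k-1) < ((k:ℝ)-1)^(k-1) * |a|^k :=
    (one_lt_div hdenpos).mp hr
  have hqt : (k:ℝ)^k / ((k:ℝ)-1)^(k-1) * |t| < 1 := by
    rw [habs_t, div_mul_div_comm]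
    rw [div_lt_one (by positivity)]
    exact hr'
  have hsumA : Summable fun n : ℕ => Afc k n 1 * t ^ n := (summAfc k hk t hqt 1).of_norm
  constructor
  · exact hsumA.congr fun n => by rw [← coeff_eq_Afc k hk n]
  · intro α
    have hS : (∑' n : ℕ, (1 / (((k : ℝ) - 1) * (n : ℝ) + 1)) * (Nat.choose (k * n) n : ℝ) *
        ((-1 : ℝ) ^ k * b ^ (k - 1) / a ^ k) ^ n) = Fs k t 1 := by
      refine tsum_congr fun n => ?_
      rw [← htdef, coeff_eq_Afc k hk n]
    show ((-b / a) * ∑' n : ℕ, (1 / (((k : ℝ) - 1) * (n : ℝ) + 1)) *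
        (Nat.choose (k * n) n : ℝ) * ((-1 : ℝ) ^ k * b ^ (k - 1) / a ^ k) ^ n) ^ k
        + a * ((-b / a) * ∑' n : ℕ, (1 / (((k : ℝ) - 1) * (n : ℝ) + 1)) *
        (Nat.choose (k * n) n : ℝ) * ((-1 : ℝ) ^ k * b ^ (k - 1) / a ^ k) ^ n) + b = 0
    rw [hS]
    set B : ℝ := Fs k t 1 with hBdef
    have hB : B = 1 + t * B ^ k := Ffun k hk t hqt
    have hbk : b^(k-1) * b = b^k := by rw [← pow_succ, Nat.sub_add_cancel (by omega)]
    have hbt : (-b/a)^k = b * t := by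
      rw [div_pow, neg_pow, htdef]
      field_simp
      linear_combination (-1:ℝ) * hbk
    have haa : a * (-b/a * B) = -(b*B) := by
      field_simp
    rw [mul_pow, hbt, haa]
    linear_combination (-b) * hB
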